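/- Let r ≥ 2 and H = K_r − e, the complete graph on r vertices with one edge removed. For every finite simple graph G of order n ≥ 1, the independence polynomial I(G∘H; x) is symmetric and unimodal, and its mode is unique and equal to n. -/

import Mathlib

open Polynomial Finset
open scoped Classical

/-- A set of vertices is independent if its elements are pairwise non-adjacent. -/
def IsIndepSet {V : Type*} (G : SimpleGraph V) (s : Finset V) : Prop :=
  ∀ u ∈ s, ∀ v ∈ s, u ≠ v → ¬ G.Adj u v

/-- The independence number: maximum cardinality of an independent set. -/
noncomputable def indepNum {V : Type*} [Fintype V] (G : SimpleGraph V) : ℕ :=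
  (Finset.univ.filter (fun s : Finset V => IsIndepSet G s)).sup Finset.card

/-- The number of independent sets of cardinality `k`. -/
noncomputable def indepCount {V : Type*} [Fintype V] (G : SimpleGraph V) (k : ℕ) : ℕ :=
  (Finset.univ.filter (fun s : Finset V => IsIndepSet G s ∧ s.card = k)).card

/-- The independence polynomial `I(G;x) = ∑ s_k x^k`. -/
noncomputable def indepPoly {V : Type*} [Fintype V] (G : SimpleGraph V) : Polynomial ℝ :=
  ∑ k ∈ Finset.range (indepNum G + 1), Polynomial.C (indepCount G k : ℝ) * Polynomial.X ^ k

/-- The corona `G ∘ H`: take `G` together with `|V(G)|` disjoint copies of `H`,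
joining each vertex `v` of `G` to all vertices of the `v`-th copy of `H`. -/
def corona {V W : Type*} (G : SimpleGraph V) (H : SimpleGraph W) :
    SimpleGraph (V ⊕ V × W) where
  Adj x y :=
    match x, y with
    | Sum.inl u, Sum.inl v => G.Adj u v
    | Sum.inl u, Sum.inr (v, _) => u = v
    | Sum.inr (v, _), Sum.inl u => u = v
    | Sum.inr (v, w), Sum.inr (v', w') => v = v' ∧ H.Adj w w'
  symm := by
    constructor
    rintro (u | ⟨v, w⟩) (u' | ⟨v', w'⟩) h
    · exact G.symm.symm _ _ h
    · exact h
    · exact h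
    · exact ⟨h.1.symm, H.symm.symm _ _ h.2⟩
  loopless := by
    constructor
    rintro (u | ⟨v, w⟩) h
    · exact G.loopless.irrefl u h
    · exact H.loopless.irrefl w h.2

/-- The disjoint union of two graphs. -/
def disjUnion {V W : Type*} (G : SimpleGraph V) (H : SimpleGraph W) :
    SimpleGraph (V ⊕ W) where
  Adj x y :=
    match x, y with
    | Sum.inl a, Sum.inl b => G.Adj a b
    | Sum.inr a, Sum.inr b => H.Adj a b
    | _, _ => False
  symm := by
    constructor
    rintro (a | a) (b | b) h
    · exact G.symm.symm _ _ h
    · exact h.elim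
    · exact h.elim
    · exact H.symm.symm _ _ h
  loopless := by
    constructor
    rintro (a | a) h
    · exact G.loopless.irrefl a h
    · exact H.loopless.irrefl a h

/-- The Zykov sum (join) of two graphs. -/
def zykovSum {V W : Type*} (G : SimpleGraph V) (H : SimpleGraph W) :
    SimpleGraph (V ⊕ W) where
  Adj x y :=
    match x, y with
    | Sum.inl a, Sum.inl b => G.Adj a b
    | Sum.inr a, Sum.inr b => H.Adj a b
    | _, _ => True
  symm := by
    constructor
    rintro (a | a) (b | b) h
    · exact G.symm.symm _ _ h
    · trivial
    · trivial
    · exact H.symm.symm _ _ h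
  loopless := by
    constructor
    rintro (a | a) h
    · exact G.loopless.irrefl a h
    · exact H.loopless.irrefl a h

/-- `K_p - e`: the complete graph on `Fin p` minus the edge joining vertices `0` and `1`. -/
def completeMinusEdge (p : ℕ) : SimpleGraph (Fin p) where
  Adj a b := a ≠ b ∧ ¬(a.val ≤ 1 ∧ b.val ≤ 1)
  symm := ⟨fun a b ⟨h1, h2⟩ => ⟨h1.symm, fun ⟨hb, ha⟩ => h2 ⟨ha, hb⟩⟩⟩
  loopless := ⟨fun a ⟨h, _⟩ => h rfl⟩

/-- The clique number of a graph. -/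
noncomputable def cliqueNum {V : Type*} [Fintype V] (G : SimpleGraph V) : ℕ :=
  (Finset.univ.filter (fun s : Finset V => G.IsClique ↑s)).sup Finset.card

/-- A graph is perfect if every induced subgraph has chromatic number
equal to its clique number. -/
def IsPerfect {V : Type*} [Fintype V] (G : SimpleGraph V) : Prop :=
  ∀ s : Set V, (G.induce s).chromaticNumber = (cliqueNum (G.induce s) : ℕ∞)

/-- The coefficient sequence `(a_0, …, a_n)` of a polynomial (indexed up to its
degree `n`) is symmetric, i.e. `a_i = a_{n-i}`. -/
def CoeffSymmetric (P : Polynomial ℝ) : Prop :=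
  ∀ i ≤ P.natDegree, P.coeff i = P.coeff (P.natDegree - i)

/-- The coefficient sequence of a polynomial is unimodal with mode `k`. -/
def IsMode (P : Polynomial ℝ) (k : ℕ) : Prop :=
  k ≤ P.natDegree ∧ (∀ i, i < k → P.coeff i ≤ P.coeff (i + 1)) ∧
    (∀ i, k ≤ i → i < P.natDegree → P.coeff (i + 1) ≤ P.coeff i)

/-- The coefficient sequence of a polynomial is unimodal. -/
def CoeffUnimodal (P : Polynomial ℝ) : Prop :=
  ∃ k, IsMode P k

/-- `k` is the unique index achieving the maximal coefficient of `P`. -/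
def IsUniqueMode (P : Polynomial ℝ) (k : ℕ) : Prop :=
  k ≤ P.natDegree ∧ ∀ j ≤ P.natDegree, j ≠ k → P.coeff j < P.coeff k

/-- The polynomial has a unique mode. -/
def HasUniqueMode (P : Polynomial ℝ) : Prop :=
  ∃ k, IsUniqueMode P k

-- ============ part 1: independent sets of K_r - e ============

section Hpart
variable {r : ℕ}

lemma isIndepSet_empty {V : Type*} (G : SimpleGraph V) : IsIndepSet G ∅ := by
  intro u hu; simp at hu

/-- the two special vertices -/
def pair01 (r : ℕ) (hr : 2 ≤ r) : Finset (Fin r) :=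
  {⟨0, by omega⟩, ⟨1, by omega⟩}

lemma card_pair01 (hr : 2 ≤ r) : (pair01 r hr).card = 2 := by
  rw [pair01, card_insert_of_notMem (by simp), card_singleton]

lemma isIndepSet_cme_iff (hr : 2 ≤ r) (b : Finset (Fin r)) :
    IsIndepSet (completeMinusEdge r) b ↔ b.card ≤ 1 ∨ b = pair01 r hr := by
  constructor
  · intro hb
    rcases le_or_gt b.card 1 with h | h
    · exact Or.inl h
    · right
      obtain ⟨x, hx, y, hy, hxy⟩ := Finset.one_lt_card.mp h
      have key : ∀ z ∈ b, z.val ≤ 1 := by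
        intro z hz
        rcases eq_or_ne z x with rfl | hzx
        · have hadj := hb z hz y hy hxy
          by_contra hc
          exact hadj ⟨hxy, fun hp => hc hp.1⟩
        · have hadj := hb z hz x hx hzx
          by_contra hc
          exact hadj ⟨hzx, fun hp => hc hp.1⟩
      have hsub : b ⊆ pair01 r hr := by
        intro z hz
        have := key z hz
        simp only [pair01, mem_insert, mem_singleton]
        rcases Nat.le_one_iff_eq_zero_or_eq_one.mp this with h0 | h1
        · left; exact Fin.ext h0
        · right; exact Fin.ext h1
      exact Finset.eq_of_subset_of_card_le hsub (by rw [card_pair01]; omega)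
  · intro hb
    rcases hb with h | rfl
    · intro u hu v hv huv
      exact absurd (Finset.card_le_one.mp h u hu v hv) huv
    · intro u hu v hv huv hadj
      simp only [pair01, mem_insert, mem_singleton] at hu hv
      have hu1 : u.val ≤ 1 := by rcases hu with rfl | rfl <;> simp
      have hv1 : v.val ≤ 1 := by rcases hv with rfl | rfl <;> simp
      exact (show _ ∧ _ from hadj).2 ⟨hu1, hv1⟩

lemma cme_filter_eq (hr : 2 ≤ r) :
    (univ.filter (fun b : Finset (Fin r) => IsIndepSet (completeMinusEdge r) b))
      = insert ∅ (insert (pair01 r hr) (univ.image fun w : Fin r => {w})) := by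
  ext b
  simp only [mem_filter, mem_univ, true_and, mem_insert, mem_image,
    isIndepSet_cme_iff hr]
  constructor
  · rintro (h | rfl)
    · rcases Nat.le_one_iff_eq_zero_or_eq_one.mp h with h0 | h1
      · left; exact card_eq_zero.mp h0
      · right; right
        obtain ⟨w, rfl⟩ := card_eq_one.mp h1
        exact ⟨w, rfl⟩
    · right; left; rfl
  · rintro (rfl | rfl | ⟨w, rfl⟩)
    · left; simp
    · right; rfl
    · left; simp

lemma sum_cme_card (hr : 2 ≤ r) (g : ℕ → ℕ) :
    ∑ b ∈ univ.filter (fun b : Finset (Fin r) => IsIndepSet (completeMinusEdge r) b),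
        g b.card = g 0 + r * g 1 + g 2 := by
  rw [cme_filter_eq hr]
  have h1 : pair01 r hr ∉ univ.image (fun w : Fin r => ({w} : Finset (Fin r))) := by
    intro h
    obtain ⟨w, -, hw⟩ := mem_image.mp h
    have := congrArg Finset.card hw
    rw [card_pair01, card_singleton] at this
    omega
  have h0 : (∅ : Finset (Fin r)) ∉
      insert (pair01 r hr) (univ.image (fun w : Fin r => ({w} : Finset (Fin r)))) := by
    intro h
    rcases mem_insert.mp h with h | h
    · have := congrArg Finset.card h
      rw [card_empty, card_pair01] at this; omega
    · obtain ⟨w, -, hw⟩ := mem_image.mp h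
      exact (Finset.singleton_ne_empty w) hw
  rw [sum_insert h0, sum_insert h1, sum_image (by intro x _ y _ h; simpa using h)]
  simp only [card_empty, card_singleton, card_pair01, sum_const, card_univ,
    Fintype.card_fin, smul_eq_mul]
  ring

lemma card_le_two_of_indep_cme (hr : 2 ≤ r) (b : Finset (Fin r))
    (hb : IsIndepSet (completeMinusEdge r) b) : b.card ≤ 2 := by
  rcases (isIndepSet_cme_iff hr b).mp hb with h | rfl
  · omega
  · rw [card_pair01]
end Hpart

-- ============ part 2: decomposition of corona vertex sets ============

section Decomp
variable {V : Type*} [Fintype V] {r : ℕ}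

noncomputable def AS (r : ℕ) {V : Type*} [Fintype V] (S : Finset (V ⊕ V × Fin r)) : Finset V :=
  univ.filter (fun v => Sum.inl v ∈ S)

noncomputable def BS (r : ℕ) {V : Type*} [Fintype V] (S : Finset (V ⊕ V × Fin r)) (v : V) : Finset (Fin r) :=
  univ.filter (fun w => Sum.inr (v, w) ∈ S)

lemma mem_AS {S : Finset (V ⊕ V × Fin r)} {v : V} : v ∈ AS r S ↔ Sum.inl v ∈ S := by
  simp [AS]

lemma mem_BS {S : Finset (V ⊕ V × Fin r)} {v : V} {w : Fin r} :
    w ∈ BS r S v ↔ Sum.inr (v, w) ∈ S := by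
  simp [BS]

lemma cardS (S : Finset (V ⊕ V × Fin r)) :
    S.card = (AS r S).card + ∑ v, (BS r S v).card := by
  have hsplit := Finset.card_filter_add_card_filter_not
    (s := S) (p := fun x => x.isLeft)
  have hleft : S.filter (fun x => x.isLeft) = (AS r S).image Sum.inl := by
    ext x
    cases x with
    | inl v => simp [mem_AS]
    | inr p => simp
  have hright : (S.filter (fun x => ¬ x.isLeft)).card = ∑ v, (BS r S v).card := by
    rw [Finset.card_eq_sum_card_fiberwise
      (f := fun x : V ⊕ V × Fin r => Sum.elim id Prod.fst x) (t := univ)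
      (fun x _ => mem_univ _)]
    refine Finset.sum_congr rfl fun v _ => ?_
    have hfib : ((S.filter (fun x => ¬ x.isLeft)).filter
        (fun x => Sum.elim id Prod.fst x = v))
        = (BS r S v).image (fun w => Sum.inr (v, w)) := by
      ext x
      cases x with
      | inl u => simp
      | inr p =>
        obtain ⟨v', w⟩ := p
        simp only [mem_filter, Sum.isLeft_inr, Bool.false_eq_true, not_false_iff, and_true,
          Sum.elim_inr, mem_image, mem_BS, Sum.inr.injEq, Prod.mk.injEq]
        constructor
        · rintro ⟨hx, rfl⟩; exact ⟨w, hx, rfl, rfl⟩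
        · rintro ⟨w', hw', rfl, rfl⟩; exact ⟨hw', rfl⟩
    rw [hfib, Finset.card_image_of_injective _
      (fun a b h => by simpa using h)]
  rw [← hsplit, hright, hleft,
    Finset.card_image_of_injective _ Sum.inl_injective]

lemma indep_corona_iff (G : SimpleGraph V) (S : Finset (V ⊕ V × Fin r)) :
    IsIndepSet (corona G (completeMinusEdge r)) S ↔
      IsIndepSet G (AS r S) ∧ (∀ v ∈ AS r S, BS r S v = ∅) ∧
        (∀ v, IsIndepSet (completeMinusEdge r) (BS r S v)) := by
  constructor
  · intro hS
    refine ⟨?_, ?_, ?_⟩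
    · intro u hu v hv huv hadj
      exact hS (Sum.inl u) (mem_AS.mp hu) (Sum.inl v) (mem_AS.mp hv)
        (by simpa using huv) hadj
    · intro v hv
      rw [Finset.eq_empty_iff_forall_notMem]
      intro w hw
      exact hS (Sum.inl v) (mem_AS.mp hv) (Sum.inr (v, w)) (mem_BS.mp hw)
        (by simp) rfl
    · intro v w hw w' hw' hww' hadj
      exact hS (Sum.inr (v, w)) (mem_BS.mp hw) (Sum.inr (v, w')) (mem_BS.mp hw')
        (by simpa using hww') ⟨rfl, hadj⟩
  · rintro ⟨hA, hAB, hB⟩ x hx y hy hxy hadj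
    cases x with
    | inl u =>
      cases y with
      | inl v =>
        exact hA u (mem_AS.mpr hx) v (mem_AS.mpr hy) (by simpa using hxy) hadj
      | inr p =>
        obtain ⟨v, w⟩ := p
        have huv : u = v := hadj
        subst huv
        have : w ∈ BS r S u := mem_BS.mpr hy
        rw [hAB u (mem_AS.mpr hx)] at this
        simp at this
    | inr p =>
      obtain ⟨v, w⟩ := p
      cases y with
      | inl u =>
        have huv : u = v := hadj
        subst huv
        have : w ∈ BS r S u := mem_BS.mpr hx
        rw [hAB u (mem_AS.mpr hy)] at this
        simp at this
      | inr q =>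
        obtain ⟨v', w'⟩ := q
        obtain ⟨rfl, hadj'⟩ := hadj
        exact hB v w (mem_BS.mpr hx) w' (mem_BS.mpr hy)
          (by simpa using hxy) hadj'

/-- reconstruction of a vertex set from `(A, g)` -/
noncomputable def Sg (r : ℕ) {V : Type*} [Fintype V] (A : Finset V) (g : V → Finset (Fin r)) :
    Finset (V ⊕ V × Fin r) :=
  univ.filter (fun x => match x with
    | Sum.inl v => v ∈ A
    | Sum.inr (v, w) => w ∈ g v)

lemma AS_Sg (A : Finset V) (g : V → Finset (Fin r)) : AS r (Sg r A g) = A := by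
  ext v; simp [AS, Sg]

lemma BS_Sg (A : Finset V) (g : V → Finset (Fin r)) (v : V) : BS r (Sg r A g) v = g v := by
  ext w; simp [BS, Sg]

lemma Sg_BS (A : Finset V) (S : Finset (V ⊕ V × Fin r)) (hA : AS r S = A) :
    Sg r A (fun v => BS r S v) = S := by
  ext x
  cases x with
  | inl v =>
    subst hA
    simp [Sg, mem_AS]
  | inr p =>
    obtain ⟨v, w⟩ := p
    simp [Sg, mem_BS]

end Decomp

-- ============ part 3: the trinomial coefficients ============

/-- `NZ r p m` = coefficient of `x^m` in `(1 + r x + x²)^p`, extended by 0 to negative `m`. -/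
def NZ (r : ℕ) : ℕ → ℤ → ℕ
  | 0, m => if m = 0 then 1 else 0
  | p+1, m => NZ r p m + r * NZ r p (m-1) + NZ r p (m-2)

lemma NZ_neg (r p : ℕ) : ∀ m : ℤ, m < 0 → NZ r p m = 0 := by
  induction p with
  | zero => intro m hm; simp [NZ]; omega
  | succ p ih =>
    intro m hm
    simp only [NZ, ih m hm, ih (m-1) (by omega), ih (m-2) (by omega)]
    ring

lemma NZ_zero (r p : ℕ) : NZ r p 0 = 1 := by
  induction p with
  | zero => simp [NZ]
  | succ p ih =>
    show NZ r p 0 + r * NZ r p (0-1) + NZ r p (0-2) = 1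
    rw [ih, NZ_neg _ _ _ (by norm_num : (0:ℤ)-1 < 0), NZ_neg _ _ _ (by norm_num : (0:ℤ)-2 < 0)]
    ring

lemma NZ_symm (r p : ℕ) : ∀ m : ℤ, NZ r p m = NZ r p (2*p - m) := by
  induction p with
  | zero => intro m; simp [NZ]
  | succ p ih =>
    intro m
    have h1 : NZ r p m = NZ r p ((2*(p+1:ℕ) - m) - 2) := by
      rw [ih m]; congr 1; push_cast; ring
    have h2 : NZ r p (m-1) = NZ r p ((2*(p+1:ℕ) - m) - 1) := by
      rw [ih (m-1)]; congr 1; push_cast; ring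
    have h3 : NZ r p (m-2) = NZ r p (2*(p+1:ℕ) - m) := by
      rw [ih (m-2)]; congr 1; push_cast; ring
    show NZ r p m + r * NZ r p (m-1) + NZ r p (m-2)
       = NZ r p (2*(p+1:ℕ) - m) + r * NZ r p ((2*(p+1:ℕ) - m)-1) + NZ r p ((2*(p+1:ℕ) - m)-2)
    rw [h1, h2, h3]; ring

lemma NZ_gt (r p : ℕ) (m : ℤ) (hm : 2*p < m) : NZ r p m = 0 := by
  rw [NZ_symm]; exact NZ_neg _ _ _ (by omega)

lemma NZ_strict (r : ℕ) (hr : 2 ≤ r) (p : ℕ) :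
    ∀ m : ℤ, -1 ≤ m → m < p → NZ r p m < NZ r p (m+1) := by
  induction p with
  | zero =>
    intro m h1 h2
    have : m = -1 := by omega
    subst this; simp [NZ]
  | succ p ih =>
    have weak : ∀ m : ℤ, m < p → NZ r p m ≤ NZ r p (m+1) := by
      intro m hm
      rcases lt_or_ge m (-1) with h | h
      · rw [NZ_neg _ _ _ (by omega)]; exact Nat.zero_le _
      · exact (ih m h hm).le
    intro m h1 h2
    have key : ∀ m : ℤ, NZ r (p+1) m = NZ r p m + r * NZ r p (m-1) + NZ r p (m-2) := fun _ => rfl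
    rcases lt_or_ge m p with hm | hm
    · -- m < p : all three differences ≥ 0, first strict
      have d1 : NZ r p m < NZ r p (m+1) := ih m h1 hm
      have d2 : NZ r p (m-1) ≤ NZ r p m := by
        have := weak (m-1) (by omega)
        have e : m - 1 + 1 = m := by ring
        rwa [e] at this
      have d3 : NZ r p (m-2) ≤ NZ r p (m-1) := by
        have := weak (m-2) (by omega)
        have e : m - 2 + 1 = m - 1 := by ring
        rwa [e] at this
      rw [key m, key (m+1)]
      have e1 : (m+1) - 1 = m := by ring
      have e2 : (m+1) - 2 = m - 1 := by ring
      rw [e1, e2]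
      have : r * NZ r p (m-1) ≤ r * NZ r p m := Nat.mul_le_mul_left _ d2
      omega
    · -- m = p
      have hm' : m = p := by omega
      subst hm'
      have hsym : NZ r p ((p:ℤ)+1) = NZ r p ((p:ℤ)-1) := by
        rw [NZ_symm r p ((p:ℤ)+1)]; congr 1; ring_nf
      have d2 : NZ r p ((p:ℤ)-1) < NZ r p p := by
        have := ih ((p:ℤ)-1) (by omega) (by omega)
        have e : (p:ℤ) - 1 + 1 = p := by ring
        rwa [e] at this
      have d3 : NZ r p ((p:ℤ)-2) ≤ NZ r p ((p:ℤ)-1) := by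
        have := weak ((p:ℤ)-2) (by omega)
        have e : (p:ℤ) - 2 + 1 = (p:ℤ) - 1 := by ring
        rwa [e] at this
      rw [key, key]
      have e1 : ((p:ℤ)+1) - 1 = p := by ring
      have e2 : ((p:ℤ)+1) - 2 = (p:ℤ) - 1 := by ring
      rw [e1, e2, hsym]
      set a := NZ r p ((p:ℤ)-1) with ha
      set b := NZ r p (p:ℤ) with hb
      set c := NZ r p ((p:ℤ)-2) with hc
      have hsub : (r-2)*a ≤ (r-2)*b := Nat.mul_le_mul_left _ d2.le
      have e3 : (r-2)*a + 2*a = r*a := by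
        have : r - 2 + 2 = r := Nat.sub_add_cancel hr
        nlinarith [this]
      have e4 : (r-2)*b + 2*b = r*b := by
        have : r - 2 + 2 = r := Nat.sub_add_cancel hr
        nlinarith [this]
      omega

-- ============ part 4: the counting lemma ============

section Count
variable {V : Type*} [Fintype V] {r : ℕ}

lemma Mcard (hr : 2 ≤ r) (T : Finset V) (m : ℕ) :
    (univ.filter (fun g : V → Finset (Fin r) =>
      (∀ v, IsIndepSet (completeMinusEdge r) (g v)) ∧ (∀ v ∉ T, g v = ∅) ∧
        ∑ v ∈ T, (g v).card = m)).card = NZ r T.card (m : ℤ) := by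
  induction T using Finset.induction generalizing m with
  | empty =>
    rcases Nat.eq_zero_or_pos m with rfl | hm
    · have : (univ.filter (fun g : V → Finset (Fin r) =>
          (∀ v, IsIndepSet (completeMinusEdge r) (g v)) ∧ (∀ v ∉ (∅: Finset V), g v = ∅) ∧
            ∑ v ∈ (∅ : Finset V), (g v).card = 0)) = {fun _ => ∅} := by
        ext g
        simp only [mem_filter, mem_univ, true_and, Finset.notMem_empty, Finset.sum_empty,
          mem_singleton]
        constructor
        · rintro ⟨-, h2, -⟩
          funext v
          exact h2 v (by simp)
        · rintro rfl
          exact ⟨fun v => isIndepSet_empty _, fun v _ => rfl, trivial⟩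
      rw [this, card_singleton, card_empty, Nat.cast_zero, NZ_zero]
    · have : (univ.filter (fun g : V → Finset (Fin r) =>
          (∀ v, IsIndepSet (completeMinusEdge r) (g v)) ∧ (∀ v ∉ (∅: Finset V), g v = ∅) ∧
            ∑ v ∈ (∅ : Finset V), (g v).card = m)) = ∅ := by
        rw [Finset.eq_empty_iff_forall_notMem]
        intro g hg
        have := (mem_filter.mp hg).2.2.2
        simp at this
        omega
      rw [this, Finset.card_empty, card_empty]
      show 0 = if (m : ℤ) = 0 then 1 else 0
      rw [if_neg (by omega)]
  | @insert a T ha ih =>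
    rw [Finset.card_eq_sum_card_fiberwise (f := fun g => g a)
      (t := univ.filter (fun b : Finset (Fin r) => IsIndepSet (completeMinusEdge r) b))
      (fun g hg => mem_filter.mpr ⟨mem_univ _, (mem_filter.mp hg).2.1 a⟩)]
    have hfib : ∀ b ∈ univ.filter (fun b : Finset (Fin r) =>
        IsIndepSet (completeMinusEdge r) b),
        ((univ.filter (fun g : V → Finset (Fin r) =>
          (∀ v, IsIndepSet (completeMinusEdge r) (g v)) ∧ (∀ v ∉ insert a T, g v = ∅) ∧
            ∑ v ∈ insert a T, (g v).card = m)).filter (fun g => g a = b)).card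
        = (fun c => if c ≤ m then NZ r T.card ((m - c : ℕ) : ℤ) else 0) b.card := by
      intro b hb
      dsimp only
      have hbind : IsIndepSet (completeMinusEdge r) b := (mem_filter.mp hb).2
      by_cases hbm : b.card ≤ m
      · rw [if_pos hbm]
        rw [← ih (m - b.card)]
        apply Finset.card_nbij' (i := fun g => Function.update g a ∅)
          (j := fun g => Function.update g a b)
        · intro g hg
          dsimp only
          obtain ⟨hg1, h4⟩ := mem_filter.mp hg
          obtain ⟨h1, h2, h3⟩ := (mem_filter.mp hg1).2
          rw [Finset.sum_insert ha, h4] at h3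
          refine mem_filter.mpr ⟨mem_univ _, fun v => ?_, fun v hv => ?_, ?_⟩
          · by_cases hva : v = a
            · subst hva; rw [Function.update_self]; exact isIndepSet_empty _
            · rw [Function.update_of_ne hva]; exact h1 v
          · by_cases hva : v = a
            · subst hva; rw [Function.update_self]
            · rw [Function.update_of_ne hva]
              exact h2 v (by simp [hva, hv])
          · rw [Finset.sum_congr rfl (fun v hv => by
              rw [Function.update_of_ne (by rintro rfl; exact ha hv)])]
            omega
        · intro g hg
          dsimp only
          obtain ⟨-, h1, h2, h3⟩ := mem_filter.mp hg
          refine mem_filter.mpr ⟨mem_filter.mpr ⟨mem_univ _, fun v => ?_, fun v hv => ?_, ?_⟩,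
            Function.update_self a b g⟩
          · by_cases hva : v = a
            · subst hva; rw [Function.update_self]; exact hbind
            · rw [Function.update_of_ne hva]; exact h1 v
          · have hva : v ≠ a := by rintro rfl; exact hv (mem_insert_self _ _)
            rw [Function.update_of_ne hva]
            exact h2 v (fun hvT => hv (mem_insert_of_mem hvT))
          · rw [Finset.sum_insert ha, Function.update_self,
              Finset.sum_congr rfl (fun v hv => by
                rw [Function.update_of_ne (by rintro rfl; exact ha hv)]), h3]
            omega
        · intro g hg
          dsimp only
          obtain ⟨-, h4⟩ := mem_filter.mp hg
          funext v
          by_cases hva : v = a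
          · subst hva; rw [Function.update_self]; exact h4.symm
          · rw [Function.update_of_ne hva, Function.update_of_ne hva]
        · intro g hg
          dsimp only
          obtain ⟨-, -, h2, -⟩ := mem_filter.mp hg
          funext v
          by_cases hva : v = a
          · subst hva; rw [Function.update_self]
            exact (h2 _ ha).symm
          · rw [Function.update_of_ne hva, Function.update_of_ne hva]
      · rw [if_neg hbm]
        rw [Finset.card_eq_zero, Finset.eq_empty_iff_forall_notMem]
        intro g hg
        obtain ⟨hg1, h4⟩ := mem_filter.mp hg
        obtain ⟨-, -, h3⟩ := (mem_filter.mp hg1).2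
        rw [Finset.sum_insert ha, h4] at h3
        omega
    have hsum := sum_cme_card hr (fun c => if c ≤ m then NZ r T.card ((m - c : ℕ) : ℤ) else 0)
    rw [Finset.sum_congr rfl hfib, hsum]
    rw [Finset.card_insert_of_notMem ha]
    show _ = NZ r T.card (m : ℤ) + r * NZ r T.card ((m : ℤ) - 1) + NZ r T.card ((m : ℤ) - 2)
    have e1 : (if 1 ≤ m then NZ r T.card ((m - 1 : ℕ) : ℤ) else 0) = NZ r T.card ((m : ℤ) - 1) := by
      rcases Nat.lt_or_ge m 1 with h | h
      · rw [if_neg (by omega), NZ_neg _ _ _ (by omega)]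
      · rw [if_pos h]; congr 1; omega
    have e2 : (if 2 ≤ m then NZ r T.card ((m - 2 : ℕ) : ℤ) else 0) = NZ r T.card ((m : ℤ) - 2) := by
      rcases Nat.lt_or_ge m 2 with h | h
      · rw [if_neg (by omega), NZ_neg _ _ _ (by omega)]
      · rw [if_pos h]; congr 1; omega
    rw [if_pos (Nat.zero_le m), Nat.sub_zero, e1, e2]
end Count

-- ============ part 5: master formula and independence number ============

section Master
variable {V : Type*} [Fintype V] {r : ℕ}

lemma fiber_card (hr : 2 ≤ r) (G : SimpleGraph V) (k : ℕ) (A : Finset V)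
    (hA : IsIndepSet G A) :
    (univ.filter (fun S : Finset (V ⊕ V × Fin r) =>
       (IsIndepSet (corona G (completeMinusEdge r)) S ∧ S.card = k) ∧ AS r S = A)).card
    = if A.card ≤ k then NZ r (Fintype.card V - A.card) ((k - A.card : ℕ) : ℤ) else 0 := by
  by_cases hAk : A.card ≤ k
  · rw [if_pos hAk]
    have hcompl : (Aᶜ : Finset V).card = Fintype.card V - A.card := Finset.card_compl A
    rw [← hcompl, ← Mcard hr Aᶜ (k - A.card)]
    apply Finset.card_nbij' (i := fun S => (fun v => BS r S v)) (j := fun g => Sg r A g)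
    · intro S hS
      obtain ⟨-, ⟨hind, hcard⟩, hAS⟩ := mem_filter.mp hS
      obtain ⟨hGA, hAB, hB⟩ := (indep_corona_iff G S).mp hind
      refine mem_filter.mpr ⟨mem_univ _, fun v => hB v, fun v hv => ?_, ?_⟩
      · rw [Finset.mem_compl, not_not] at hv
        exact hAB v (hAS ▸ hv)
      · have hzero : ∀ v ∈ (univ : Finset V), v ∉ (Aᶜ : Finset V) → (BS r S v).card = 0 := by
          intro v _ hv
          rw [Finset.mem_compl, not_not] at hv
          rw [hAB v (hAS ▸ hv), card_empty]
        have : ∑ v ∈ (Aᶜ : Finset V), (BS r S v).card = ∑ v, (BS r S v).card :=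
          Finset.sum_subset (subset_univ _) hzero
        rw [this]
        have := cardS S
        rw [hAS, hcard] at this
        omega
    · intro g hg
      obtain ⟨-, h1, h2, h3⟩ := mem_filter.mp hg
      have hBS : ∀ v, BS r (Sg r A g) v = g v := BS_Sg A g
      refine mem_filter.mpr ⟨mem_univ _, ⟨?_, ?_⟩, AS_Sg A g⟩
      · rw [indep_corona_iff]
        refine ⟨by rw [AS_Sg]; exact hA, fun v hv => ?_, fun v => ?_⟩
        · rw [hBS]
          rw [AS_Sg] at hv
          exact h2 v (by simp [hv])
        · rw [hBS]; exact h1 v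
      · rw [cardS, AS_Sg]
        have : ∑ v, (g v).card = ∑ v ∈ (Aᶜ : Finset V), (g v).card := by
          refine (Finset.sum_subset (subset_univ _) ?_).symm
          intro v _ hv
          rw [Finset.mem_compl, not_not] at hv
          rw [h2 v (by simp [hv]), card_empty]
        rw [Finset.sum_congr rfl (fun v _ => by rw [hBS]), this, h3]
        omega
    · intro S hS
      exact Sg_BS A S (mem_filter.mp hS).2.2
    · intro g hg
      funext v
      exact BS_Sg A g v
  · rw [if_neg hAk, Finset.card_eq_zero, Finset.eq_empty_iff_forall_notMem]
    intro S hS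
    obtain ⟨-, ⟨hind, hcard⟩, hAS⟩ := mem_filter.mp hS
    have := cardS S
    rw [hAS, hcard] at this
    omega

lemma indepCount_corona (hr : 2 ≤ r) (G : SimpleGraph V) (k : ℕ) :
    indepCount (corona G (completeMinusEdge r)) k
      = ∑ A ∈ univ.filter (fun A : Finset V => IsIndepSet G A),
          (if A.card ≤ k then NZ r (Fintype.card V - A.card) ((k - A.card : ℕ) : ℤ) else 0) := by
  rw [indepCount, Finset.card_eq_sum_card_fiberwise (f := AS r)
    (t := univ.filter (fun A : Finset V => IsIndepSet G A))
    (fun S hS => mem_filter.mpr ⟨mem_univ _,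
      ((indep_corona_iff G S).mp (mem_filter.mp hS).2.1).1⟩)]
  refine Finset.sum_congr rfl fun A hA => ?_
  rw [Finset.filter_filter]
  exact fiber_card hr G k A (mem_filter.mp hA).2

lemma card_le_of_indep {A : Finset V} : A.card ≤ Fintype.card V := by
  simpa using Finset.card_le_card (Finset.subset_univ A)

lemma indepNum_corona (hr : 2 ≤ r) (G : SimpleGraph V) :
    indepNum (corona G (completeMinusEdge r)) = 2 * Fintype.card V := by
  apply le_antisymm
  · apply Finset.sup_le
    intro S hS
    obtain ⟨hGA, hAB, hB⟩ := (indep_corona_iff G S).mp (mem_filter.mp hS).2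
    rw [cardS S]
    have hb : ∀ v ∈ (univ : Finset V), (BS r S v).card ≤ if v ∈ AS r S then 0 else 2 := by
      intro v _
      by_cases h : v ∈ AS r S
      · simp [h, hAB v h]
      · simp only [h, if_false]
        exact card_le_two_of_indep_cme hr _ (hB v)
    have hsum := Finset.sum_le_sum hb
    have hsplit : ∑ v : V, (if v ∈ AS r S then 0 else 2)
        = 2 * (Fintype.card V - (AS r S).card) := by
      rw [Finset.sum_ite, Finset.sum_const, Finset.sum_const]
      have h1 : (univ.filter (fun v => v ∈ AS r S)).card = (AS r S).card := by
        congr 1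
        rw [Finset.filter_mem_eq_inter, Finset.univ_inter]
      have h2 := Finset.card_filter_add_card_filter_not
        (s := (univ : Finset V)) (p := fun v => v ∈ AS r S)
      rw [Finset.card_univ] at h2
      have h3 : (AS r S).card ≤ Fintype.card V := card_le_of_indep
      simp only [smul_eq_mul]
      omega
    have h3 : (AS r S).card ≤ Fintype.card V := card_le_of_indep
    rw [hsplit] at hsum
    omega
  · have hinj : Function.Injective
        (fun p : V × Fin 2 => (Sum.inr (p.1, Fin.castLE hr p.2) : V ⊕ V × Fin r)) := by
      intro p q h
      simp only [Sum.inr.injEq, Prod.mk.injEq] at h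
      exact Prod.ext h.1 (by simpa [Fin.ext_iff] using congrArg Fin.val h.2)
    set S0 : Finset (V ⊕ V × Fin r) :=
      univ.image (fun p : V × Fin 2 => Sum.inr (p.1, Fin.castLE hr p.2)) with hS0
    have hcard : S0.card = 2 * Fintype.card V := by
      rw [hS0, Finset.card_image_of_injective _ hinj, Finset.card_univ,
        Fintype.card_prod, Fintype.card_fin]
      ring
    have hindep : IsIndepSet (corona G (completeMinusEdge r)) S0 := by
      intro x hx y hy hxy hadj
      obtain ⟨p, -, rfl⟩ := Finset.mem_image.mp hx
      obtain ⟨q, -, rfl⟩ := Finset.mem_image.mp hy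
      obtain ⟨h1, h2⟩ := hadj
      exact (show _ ∧ _ from h2).2 ⟨Nat.lt_succ_iff.mp (Fin.is_lt p.2), Nat.lt_succ_iff.mp (Fin.is_lt q.2)⟩
    calc 2 * Fintype.card V = S0.card := hcard.symm
      _ ≤ _ := Finset.le_sup (f := Finset.card)
          (Finset.mem_filter.mpr ⟨mem_univ _, hindep⟩)

end Master

-- ============ part 6: symmetry and unimodality of the coefficients ============

section Final
variable {V : Type*} [Fintype V] {r : ℕ}

lemma s_symm (hr : 2 ≤ r) (G : SimpleGraph V) (i : ℕ) (hi : i ≤ 2 * Fintype.card V) :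
    indepCount (corona G (completeMinusEdge r)) i
      = indepCount (corona G (completeMinusEdge r)) (2 * Fintype.card V - i) := by
  rw [indepCount_corona hr, indepCount_corona hr]
  refine Finset.sum_congr rfl fun A hA => ?_
  have ha : A.card ≤ Fintype.card V := card_le_of_indep
  set N := Fintype.card V
  by_cases h1 : A.card ≤ i <;> by_cases h2 : A.card ≤ 2 * N - i
  · rw [if_pos h1, if_pos h2, NZ_symm r (N - A.card) ((i - A.card : ℕ) : ℤ)]
    congr 1
    omega
  · rw [if_pos h1, if_neg h2]
    exact NZ_gt r _ _ (by omega)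
  · rw [if_neg h1, if_pos h2]
    exact (NZ_gt r _ _ (by omega)).symm
  · omega

lemma s_strict (hr : 2 ≤ r) (G : SimpleGraph V) (i : ℕ) (hi : i < Fintype.card V) :
    indepCount (corona G (completeMinusEdge r)) i
      < indepCount (corona G (completeMinusEdge r)) (i + 1) := by
  rw [indepCount_corona hr, indepCount_corona hr]
  set N := Fintype.card V
  apply Finset.sum_lt_sum
  · intro A hA
    have ha : A.card ≤ N := card_le_of_indep
    by_cases h1 : A.card ≤ i
    · rw [if_pos h1, if_pos (by omega)]
      have hcast : ((i + 1 - A.card : ℕ) : ℤ) = ((i - A.card : ℕ) : ℤ) + 1 := by omega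
      rw [hcast]
      exact (NZ_strict r hr _ _ (by omega) (by omega)).le
    · by_cases h2 : A.card ≤ i + 1
      · rw [if_neg h1, if_pos h2]
        exact Nat.zero_le _
      · rw [if_neg h1, if_neg h2]
  · refine ⟨∅, Finset.mem_filter.mpr ⟨mem_univ _, isIndepSet_empty G⟩, ?_⟩
    simp only [card_empty, Nat.zero_le, if_pos, Nat.sub_zero]
    have hcast : ((i + 1 : ℕ) : ℤ) = (i : ℤ) + 1 := by omega
    rw [hcast]
    exact NZ_strict r hr N (i : ℤ) (by omega) (by omega)

end Final


/-- for `H = K_r - e` (`r ≥ 2`) and `G` of order `n ≥ 1`, `I(G∘H; x)` is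
symmetric and unimodal, and its mode is unique and equal to `n`. -/
theorem corona_completeMinusEdge_symmetric_unimodal {V : Type*} [Fintype V]
    (G : SimpleGraph V) (n : ℕ) (hn : Fintype.card V = n) (hn1 : 1 ≤ n)
    (r : ℕ) (hr : 2 ≤ r) :
    let s := indepCount (corona G (completeMinusEdge r))
    let α := indepNum (corona G (completeMinusEdge r))
    (∀ i ≤ α, s i = s (α - i)) ∧
      (∀ i, i < n → s i ≤ s (i + 1)) ∧
      (∀ i, n ≤ i → i < α → s (i + 1) ≤ s i) ∧
      (∀ j ≤ α, j ≠ n → s j < s n) := by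
  subst hn
  intro s α
  set N := Fintype.card V with hN
  have hs : ∀ k, s k = indepCount (corona G (completeMinusEdge r)) k := fun _ => rfl
  have hα : α = 2 * N := indepNum_corona hr G
  have mono : ∀ a b : ℕ, a ≤ b → b ≤ N →
      indepCount (corona G (completeMinusEdge r)) a
        ≤ indepCount (corona G (completeMinusEdge r)) b := by
    intro a b hab hbN
    induction b, hab using Nat.le_induction with
    | base => exact le_refl _
    | succ b hb ih =>
      exact le_trans (ih (by omega)) (s_strict hr G b (by omega)).le
  have hlt : ∀ j, j < N →
      indepCount (corona G (completeMinusEdge r)) j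
        < indepCount (corona G (completeMinusEdge r)) N := by
    intro j hj
    exact lt_of_lt_of_le (s_strict hr G j hj) (mono (j + 1) N (by omega) le_rfl)
  refine ⟨?_, ?_, ?_, ?_⟩
  · intro i hi
    rw [hα] at hi
    rw [hs, hs, hα]
    exact s_symm hr G i hi
  · intro i hi
    rw [hs, hs]
    exact (s_strict hr G i hi).le
  · intro i hi1 hi2
    rw [hα] at hi2
    rw [hs, hs]
    have h1 := s_symm hr G (i + 1) (by omega)
    have h2 := s_symm hr G i (by omega)
    rw [← hN] at h1 h2
    have e2 : 2 * N - (i + 1) = 2 * N - i - 1 := by omega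
    rw [e2] at h1
    have h3 := s_strict hr G (2 * N - i - 1) (by omega)
    have e3 : 2 * N - i - 1 + 1 = 2 * N - i := by omega
    rw [e3] at h3
    omega
  · intro j hj hjn
    rw [hα] at hj
    rw [hs, hs]
    rcases Nat.lt_or_ge j N with h | h
    · exact hlt j h
    · have hjN : N < j := by omega
      rw [s_symm hr G j hj]
      exact hlt (2 * N - j) (by omega)
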